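/- arXiv:1309.3829 — 6 statements merged into one kernel-verified Lean document; each statement's English description precedes it below -/
import Mathlib

section
/- If (F_n) is a nonincreasing sequence of closed subsets of Ω with ⋂_{n=1}^∞ F_n = F, then c(F_n) decreases to c(F); that is, inf_{n} c(F_n) = c(F). -/
open MeasureTheory Filter Topology
open scoped ENNReal NNReal

/-- Continuity from above on closed sets of the upper capacity associated with a
nonempty weakly compact set of Borel probability measures on a Polish space:
if `F n` are closed and `F n ↓ F`, then `c(F n) ↓ c(F)`, i.e. `⨅ n, c (F n) = c F`. -/
theorem upperCapacity_continuous_from_above_closed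
    {Ω : Type*} [TopologicalSpace Ω] [PolishSpace Ω] [MeasurableSpace Ω] [BorelSpace Ω]
    (Ps : Set (ProbabilityMeasure Ω)) (hne : Ps.Nonempty) (hcompact : IsCompact Ps)
    (F : ℕ → Set Ω) (hclosed : ∀ n, IsClosed (F n)) (hanti : Antitone F)
    (S : Set Ω) (hS : (⋂ n, F n) = S) :
    (⨅ n, ⨆ P ∈ Ps, (P : Measure Ω) (F n)) = ⨆ P ∈ Ps, (P : Measure Ω) S := by
  subst hS
  set c : ℝ≥0∞ := ⨅ n, ⨆ P ∈ Ps, (P : Measure Ω) (F n) with hc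
  apply le_antisymm
  · -- hard direction
    apply ENNReal.le_of_forall_pos_le_add
    intro ε εpos _
    have εne : (ε : ℝ≥0∞) ≠ 0 := by exact_mod_cast εpos.ne'
    -- choose P n ∈ Ps with c ≤ P n (F n) + ε
    have hchoice : ∀ n : ℕ, ∃ P ∈ Ps, c ≤ (P : Measure Ω) (F n) + ε := by
      intro n
      by_contra h
      push_neg at h
      have hsle : (⨆ P ∈ Ps, (P : Measure Ω) (F n)) + ε ≤ c := by
        rw [ENNReal.biSup_add hne]
        exact iSup₂_le fun P hP => (h P hP).le
      have hcle : c ≤ ⨆ P ∈ Ps, (P : Measure Ω) (F n) := iInf_le _ n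
      have hfin : (⨆ P ∈ Ps, (P : Measure Ω) (F n)) ≠ ∞ := by
        refine ne_of_lt (lt_of_le_of_lt (iSup₂_le fun P _ => ?_) (by norm_num : (1:ℝ≥0∞) < ∞))
        exact prob_le_one
      exact absurd (le_trans hsle hcle)
        (not_le.mpr (ENNReal.lt_add_right hfin εne))
    choose P hPmem hPle using hchoice
    -- take an ultrafilter limit
    obtain ⟨Q, hQmem, hQle⟩ :=
      hcompact.ultrafilter_le_nhds (Ultrafilter.map P (Ultrafilter.of atTop))
        (by
          rw [le_principal_iff, Ultrafilter.mem_coe, Ultrafilter.mem_map]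
          exact Filter.univ_mem' fun n => hPmem n)
    have htendsto : Tendsto P (Ultrafilter.of (atTop : Filter ℕ) : Filter ℕ) (𝓝 Q) := by
      rwa [Ultrafilter.coe_map] at hQle
    have key : ∀ m : ℕ, c - ε ≤ (Q : Measure Ω) (F m) := by
      intro m
      have hlimsup := ProbabilityMeasure.limsup_measure_closed_le_of_tendsto htendsto
        (hclosed m)
      refine le_trans ?_ hlimsup
      refine le_limsup_of_frequently_le (Eventually.frequently ?_)
        (isBoundedUnder_of ⟨∞, fun _ => le_top⟩)
      have hev : ∀ᶠ n in (Ultrafilter.of (atTop : Filter ℕ) : Filter ℕ), m ≤ n :=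
        (Ultrafilter.of_le atTop) (eventually_ge_atTop m)
      filter_upwards [hev] with n hn
      have h1 : c ≤ (P n : Measure Ω) (F m) + ε :=
        le_trans (hPle n) (add_le_add_left (measure_mono (hanti hn)) ε)
      exact tsub_le_iff_right.mpr h1
    have hQS : c - ε ≤ (Q : Measure Ω) (⋂ n, F n) := by
      rw [Antitone.measure_iInter hanti
        (fun n => ((hclosed n).measurableSet).nullMeasurableSet)
        ⟨0, (measure_lt_top _ _).ne⟩]
      exact le_iInf key
    have : c - ε ≤ ⨆ P ∈ Ps, (P : Measure Ω) (⋂ n, F n) :=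
      le_trans hQS (le_iSup₂ (f := fun (P : ProbabilityMeasure Ω) (_ : P ∈ Ps) => (P : Measure Ω) (⋂ n, F n)) Q hQmem)
    exact tsub_le_iff_right.mp this
  · -- easy direction
    refine le_iInf fun n => iSup₂_mono fun P _ => measure_mono ?_
    exact Set.iInter_subset F n
end

section
/- Let (X_n) and X be real-valued measurable functions on Ω such that X_n converges to X in capacity, i.e., for every ε > 0, c({ω : |X_n(ω) − X(ω)| ≥ ε}) → 0 as n → ∞. Then there exists a strictly increasing sequence of indices (n_k) such that X_{n_k} converges to X quasi-surely, i.e., c({ω : X_{n_k}(ω) does not converge to X(ω) as k → ∞}) = 0. -/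
open MeasureTheory Filter
open scoped ENNReal

/-- If `X n` converges to `Y` in capacity, then some subsequence converges
quasi-surely, i.e. outside a polar set. -/
theorem exists_subseq_tendsto_qs_of_tendsto_in_capacity
    {Ω : Type*} [MeasurableSpace Ω]
    (Ps : Set (Measure Ω)) (hne : Ps.Nonempty)
    (hprob : ∀ P ∈ Ps, IsProbabilityMeasure P)
    (X : ℕ → Ω → ℝ) (Y : Ω → ℝ)
    (hX : ∀ n, Measurable (X n)) (hY : Measurable Y)
    (h : ∀ ε : ℝ, 0 < ε →
      Tendsto (fun n => ⨆ P ∈ Ps, P {ω | ε ≤ |X n ω - Y ω|}) atTop (nhds 0)) :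
    ∃ φ : ℕ → ℕ, StrictMono φ ∧
      (⨆ P ∈ Ps, P {ω | ¬ Tendsto (fun k => X (φ k) ω) atTop (nhds (Y ω))}) = 0 := by
  have hev : ∀ k : ℕ, ∀ᶠ n in atTop,
      (⨆ P ∈ Ps, P {ω | (1/2 : ℝ)^k ≤ |X n ω - Y ω|}) < ((1/2 : ℝ≥0∞)^k) := by
    intro k
    have hk : (0 : ℝ) < (1/2)^k := by positivity
    exact (h _ hk).eventually_lt_const
      (ENNReal.pow_pos (by norm_num) k)
  obtain ⟨φ, hφ, hφ2⟩ := Filter.extraction_forall_of_eventually hev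
  refine ⟨φ, hφ, ?_⟩
  set A : ℕ → Set Ω := fun k => {ω | (1/2 : ℝ)^k ≤ |X (φ k) ω - Y ω|} with hA
  -- the bad set is contained in limsup A
  have hsub : {ω | ¬ Tendsto (fun k => X (φ k) ω) atTop (nhds (Y ω))} ⊆
      Filter.limsup A atTop := by
    intro ω hω
    by_contra hc
    rw [Set.mem_setOf_eq] at hω
    apply hω
    have hnot : ∀ᶠ k in atTop, ω ∉ A k := by
      rw [← Filter.not_frequently]
      intro hfreq
      exact hc (Filter.mem_limsup_iff_frequently_mem.mpr hfreq)
    rw [tendsto_iff_dist_tendsto_zero]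
    refine squeeze_zero' (g := fun k => (1/2 : ℝ)^k)
      (Eventually.of_forall fun k => dist_nonneg) ?_ ?_
    · filter_upwards [hnot] with k hk
      simp only [hA, Set.mem_setOf_eq, not_le] at hk
      rw [Real.dist_eq]
      exact hk.le
    · exact tendsto_pow_atTop_nhds_zero_of_lt_one (by norm_num) (by norm_num)
  -- for each P, P (limsup A) = 0 by Borel–Cantelli
  have hP0 : ∀ P ∈ Ps, P (Filter.limsup A atTop) = 0 := by
    intro P hP
    apply measure_limsup_atTop_eq_zero
    have hle : ∀ k, P (A k) ≤ (1/2 : ℝ≥0∞)^k := by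
      intro k
      refine le_of_lt (lt_of_le_of_lt ?_ (hφ2 k))
      exact le_iSup₂_of_le P hP le_rfl
    refine ne_of_lt (lt_of_le_of_lt (ENNReal.tsum_le_tsum hle) ?_)
    simp_rw [one_div]
    rw [ENNReal.tsum_geometric]
    refine ENNReal.inv_lt_top.mpr ?_
    rw [ENNReal.one_sub_inv_two]
    simp
  refine le_antisymm (iSup₂_le fun P hP => ?_) zero_le
  calc P {ω | ¬ Tendsto (fun k => X (φ k) ω) atTop (nhds (Y ω))}
      ≤ P (Filter.limsup A atTop) := measure_mono hsub
    _ = 0 := hP0 P hP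
end

section
/- Let (f_n) be a sequence of continuous functions f_n : Ω → ℝ with |f_n| ≤ C for all n for some constant C, such that f_{n+1}(ω) ≤ f_n(ω) for all n and ω, and let f(ω) = inf_n f_n(ω) be the pointwise (Borel measurable) limit. Then sup_{P ∈ 𝒫} ∫ f_n dP decreases to sup_{P ∈ 𝒫} ∫ f dP as n → ∞; that is, inf_n sup_{P ∈ 𝒫} ∫ f_n dP = sup_{P ∈ 𝒫} ∫ f dP. -/
open MeasureTheory Filter BoundedContinuousFunction

/-- For a nonempty weakly compact set of Borel probability measures on a Polish
space, the upper expectation of a uniformly bounded, pointwise nonincreasing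
sequence of continuous functions decreases to the upper expectation of the
pointwise limit. -/
theorem iInf_upperExpectation_of_decreasing_continuous
    {Ω : Type*} [TopologicalSpace Ω] [PolishSpace Ω] [MeasurableSpace Ω] [BorelSpace Ω]
    (Ps : Set (ProbabilityMeasure Ω)) (hne : Ps.Nonempty) (hcompact : IsCompact Ps)
    (f : ℕ → Ω → ℝ) (hcont : ∀ n, Continuous (f n))
    (C : ℝ) (hbdd : ∀ n ω, |f n ω| ≤ C)
    (hdec : ∀ n ω, f (n + 1) ω ≤ f n ω)
    (g : Ω → ℝ) (hg : ∀ ω, g ω = ⨅ n, f n ω) :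
    (⨅ n, ⨆ P : Ps, ∫ ω, f n ω ∂((P : ProbabilityMeasure Ω) : Measure Ω))
      = ⨆ P : Ps, ∫ ω, g ω ∂((P : ProbabilityMeasure Ω) : Measure Ω) := by
  -- antitone in n
  have hanti : ∀ ω, Antitone fun n => f n ω := fun ω =>
    antitone_nat_of_succ_le fun n => hdec n ω
  have hgle : ∀ n ω, g ω ≤ f n ω := by
    intro n ω
    rw [hg ω]
    exact ciInf_le ⟨-C, by rintro x ⟨m, rfl⟩; exact neg_le_of_abs_le (hbdd m ω)⟩ n
  have hgbdd : ∀ ω, |g ω| ≤ C := by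
    intro ω
    rw [abs_le]
    constructor
    · rw [hg ω]
      exact le_ciInf fun n => neg_le_of_abs_le (hbdd n ω)
    · exact (hgle 0 ω).trans (le_of_abs_le (hbdd 0 ω))
  -- bounded continuous versions
  set F : ℕ → (Ω →ᵇ ℝ) := fun n =>
    BoundedContinuousFunction.ofNormedAddCommGroup (f n) (hcont n) C
      (fun x => by simpa using hbdd n x) with hF
  have hcont' : ∀ n, Continuous fun P : ProbabilityMeasure Ω => ∫ ω, f n ω ∂(P : Measure Ω) :=
    fun n => ProbabilityMeasure.continuous_integral_boundedContinuousFunction (F n)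
  -- integrability
  have hintf : ∀ n (P : ProbabilityMeasure Ω), Integrable (f n) (P : Measure Ω) :=
    fun n P => (F n).integrable _
  have hgmeas : Measurable g := by
    have : Measurable fun ω => ⨅ n, f n ω := Measurable.iInf fun n => (hcont n).measurable
    simpa [funext hg] using this
  have hintg : ∀ P : ProbabilityMeasure Ω, Integrable g (P : Measure Ω) := by
    intro P
    refine ⟨hgmeas.aestronglyMeasurable, ?_⟩
    apply (hasFiniteIntegral_const C).mono'
    exact Filter.Eventually.of_forall fun ω => by simpa using hgbdd ω
  -- pointwise convergence of integrals
  have hconv : ∀ P : ProbabilityMeasure Ω,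
      Tendsto (fun n => ∫ ω, f n ω ∂(P : Measure Ω)) atTop (nhds (∫ ω, g ω ∂(P : Measure Ω))) := by
    intro P
    apply tendsto_integral_of_dominated_convergence (fun _ => C)
      (fun n => (hcont n).measurable.aestronglyMeasurable)
      (integrable_const C)
      (fun n => Filter.Eventually.of_forall fun ω => by simpa using hbdd n ω)
    refine Filter.Eventually.of_forall fun ω => ?_
    rw [hg ω]
    exact tendsto_atTop_ciInf (hanti ω)
      ⟨-C, by rintro x ⟨m, rfl⟩; exact neg_le_of_abs_le (hbdd m ω)⟩
  -- integrals are antitone in n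
  have hintanti : ∀ P : ProbabilityMeasure Ω,
      Antitone fun n => ∫ ω, f n ω ∂(P : Measure Ω) := by
    intro P
    apply antitone_nat_of_succ_le
    intro n
    exact integral_mono (hintf (n+1) P) (hintf n P) (hdec n)
  have hginf : ∀ P : ProbabilityMeasure Ω,
      ∫ ω, g ω ∂(P : Measure Ω) = ⨅ n, ∫ ω, f n ω ∂(P : Measure Ω) := by
    intro P
    refine tendsto_nhds_unique (hconv P) (tendsto_atTop_ciInf (hintanti P) ?_)
    refine ⟨-C, ?_⟩
    rintro x ⟨m, rfl⟩
    calc (-C : ℝ) = ∫ _, (-C : ℝ) ∂(P : Measure Ω) := by simp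
      _ ≤ _ := integral_mono (integrable_const _) (hintf m P)
            (fun ω => neg_le_of_abs_le (hbdd m ω))
  -- bounds on integrals
  have hIbdd : ∀ n (P : ProbabilityMeasure Ω), |∫ ω, f n ω ∂(P : Measure Ω)| ≤ C := by
    intro n P
    calc |∫ ω, f n ω ∂(P : Measure Ω)| ≤ ∫ ω, |f n ω| ∂(P : Measure Ω) :=
          (by simpa [Real.norm_eq_abs] using norm_integral_le_integral_norm (fun ω => f n ω))
      _ ≤ ∫ _, C ∂(P : Measure Ω) :=
          integral_mono (hintf n P).abs (integrable_const _) (fun ω => hbdd n ω)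
      _ = C := by simp
  have hGbdd : ∀ P : ProbabilityMeasure Ω, |∫ ω, g ω ∂(P : Measure Ω)| ≤ C := by
    intro P
    calc |∫ ω, g ω ∂(P : Measure Ω)| ≤ ∫ ω, |g ω| ∂(P : Measure Ω) :=
          (by simpa [Real.norm_eq_abs] using norm_integral_le_integral_norm (fun ω => g ω))
      _ ≤ ∫ _, C ∂(P : Measure Ω) :=
          integral_mono (hintg P).abs (integrable_const _) (fun ω => hgbdd ω)
      _ = C := by simp
  haveI : Nonempty Ps := hne.to_subtype
  have hbddAboveF : ∀ n, BddAbove (Set.range fun P : Ps => ∫ ω, f n ω ∂((P : ProbabilityMeasure Ω) : Measure Ω)) := by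
    intro n
    exact ⟨C, by rintro x ⟨P, rfl⟩; exact le_of_abs_le (hIbdd n P)⟩
  have hbddAboveG : BddAbove (Set.range fun P : Ps => ∫ ω, g ω ∂((P : ProbabilityMeasure Ω) : Measure Ω)) :=
    ⟨C, by rintro x ⟨P, rfl⟩; exact le_of_abs_le (hGbdd P)⟩
  set S : ℕ → ℝ := fun n => ⨆ P : Ps, ∫ ω, f n ω ∂((P : ProbabilityMeasure Ω) : Measure Ω) with hS
  have hSbelow : BddBelow (Set.range S) := by
    obtain ⟨P₀, hP₀⟩ := hne
    refine ⟨-C, ?_⟩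
    rintro x ⟨n, rfl⟩
    calc (-C : ℝ) ≤ ∫ ω, f n ω ∂((P₀ : ProbabilityMeasure Ω) : Measure Ω) :=
          neg_le_of_abs_le (hIbdd n P₀)
      _ ≤ S n := le_ciSup (hbddAboveF n) (⟨P₀, hP₀⟩ : Ps)
  apply le_antisymm
  · -- ⨅ S ≤ ⨆ ∫ g : compactness argument
    set s : ℝ := ⨅ n, S n with hs
    have hKey : ∃ P ∈ Ps, ∀ n, s ≤ ∫ ω, f n ω ∂(P : Measure Ω) := by
      set K : ℕ → Set (ProbabilityMeasure Ω) :=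
        fun n => {P ∈ Ps | s ≤ ∫ ω, f n ω ∂(P : Measure Ω)} with hK
      have hKcl : ∀ n, IsClosed (K n) := by
        intro n
        exact hcompact.isClosed.inter (isClosed_le continuous_const (hcont' n))
      have hKcp : ∀ n, IsCompact (K n) :=
        fun n => hcompact.of_isClosed_subset (hKcl n) (fun P hP => hP.1)
      have hKne : ∀ n, (K n).Nonempty := by
        intro n
        obtain ⟨P, hPmem, hPmax⟩ := hcompact.exists_isMaxOn hne (hcont' n).continuousOn
        refine ⟨P, hPmem, ?_⟩
        have h1 : S n ≤ ∫ ω, f n ω ∂(P : Measure Ω) :=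
          ciSup_le fun Q => hPmax Q.2
        exact (ciInf_le hSbelow n).trans h1
      have hKanti : ∀ n, K (n + 1) ⊆ K n := by
        intro n P hP
        exact ⟨hP.1, hP.2.trans (integral_mono (hintf (n+1) P) (hintf n P) (hdec n))⟩
      obtain ⟨P, hP⟩ := IsCompact.nonempty_iInter_of_sequence_nonempty_isCompact_isClosed
        K hKanti hKne (hKcp 0) hKcl
      simp only [Set.mem_iInter] at hP
      exact ⟨P, (hP 0).1, fun n => (hP n).2⟩
    obtain ⟨P, hPmem, hPs⟩ := hKey
    have : s ≤ ∫ ω, g ω ∂(P : Measure Ω) := by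
      rw [hginf P]
      exact le_ciInf hPs
    exact this.trans (le_ciSup hbddAboveG (⟨P, hPmem⟩ : Ps))
  · -- ⨆ ∫ g ≤ ⨅ S
    apply ciSup_le
    intro P
    apply le_ciInf
    intro n
    calc ∫ ω, g ω ∂((P : ProbabilityMeasure Ω) : Measure Ω)
        ≤ ∫ ω, f n ω ∂((P : ProbabilityMeasure Ω) : Measure Ω) :=
          integral_mono (hintg _) (hintf n _) (hgle n)
      _ ≤ S n := le_ciSup (hbddAboveF n) P
end

section
/- Suppose 𝒫 ⊆ 𝒫' and sup_{P ∈ 𝒫'} ∫ f dP = sup_{P ∈ 𝒫} ∫ f dP for every bounded continuous function f : Ω → ℝ. Then for every Borel set A ⊆ Ω, sup_{P ∈ 𝒫'} P(A) = sup_{P ∈ 𝒫} P(A); i.e., the two capacities coincide on all Borel sets. -/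
open MeasureTheory

open Filter Topology BoundedContinuousFunction Set
open scoped NNReal ENNReal

private lemma aux_ofReal_iSup {ι : Sort*} [Nonempty ι] (g : ι → ℝ) (hbdd : ∀ i, g i ≤ 1) :
    (⨆ i, ENNReal.ofReal (g i)) = ENNReal.ofReal (⨆ i, g i) := by
  refine (Monotone.map_ciSup_of_continuousAt (f := ENNReal.ofReal)
    ENNReal.continuous_ofReal.continuousAt (fun a b h => ENNReal.ofReal_le_ofReal h)
    ⟨1, by rintro x ⟨i, rfl⟩; exact hbdd i⟩).symm

/-- If `Ps ⊆ Ps'` and the two families have the same upper expectation on all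
bounded continuous functions, then their capacities coincide on all Borel
sets. -/
theorem upperCapacity_eq_of_upperExpectation_eq_on_boundedContinuous
    {Ω : Type*} [TopologicalSpace Ω] [PolishSpace Ω] [MeasurableSpace Ω] [BorelSpace Ω]
    (Ps Ps' : Set (ProbabilityMeasure Ω)) (hne : Ps.Nonempty) (hcompact : IsCompact Ps)
    (hsub : Ps ⊆ Ps')
    (heq : ∀ f : Ω → ℝ, Continuous f → (∃ C : ℝ, ∀ ω, |f ω| ≤ C) →
      (⨆ P : Ps', ∫ ω, f ω ∂((P : ProbabilityMeasure Ω) : Measure Ω))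
        = ⨆ P : Ps, ∫ ω, f ω ∂((P : ProbabilityMeasure Ω) : Measure Ω)) :
    ∀ A : Set Ω, MeasurableSet A →
      (⨆ P ∈ Ps', (P : Measure Ω) A) = ⨆ P ∈ Ps, (P : Measure Ω) A := by
  have hne' : Ps'.Nonempty := hne.mono hsub
  have hnePs : Nonempty Ps := hne.to_subtype
  have hnePs' : Nonempty Ps' := hne'.to_subtype
  -- The key case: closed sets.
  have key : ∀ F : Set Ω, IsClosed F →
      (⨆ P ∈ Ps', (P : Measure Ω) F) = ⨆ P ∈ Ps, (P : Measure Ω) F := by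
    intro F hF
    letI := TopologicalSpace.upgradeIsCompletelyMetrizable Ω
    set f : ℕ → (Ω →ᵇ ℝ≥0) :=
      fun n => thickenedIndicator (δ := (1 : ℝ)/(n+1)) Nat.one_div_pos_of_nat F with hfdef
    set G : ℕ → ProbabilityMeasure Ω → ℝ≥0∞ :=
      fun n P => ∫⁻ ω, (f n ω : ℝ≥0∞) ∂(P : Measure Ω) with hGdef
    -- basic facts
    have hG_le_one : ∀ n P, G n P ≤ 1 := by
      intro n P
      calc ∫⁻ ω, (f n ω : ℝ≥0∞) ∂(P : Measure Ω)
          ≤ ∫⁻ _, 1 ∂(P : Measure Ω) := by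
            refine lintegral_mono fun ω => ?_
            simp only [hfdef]
            exact_mod_cast thickenedIndicator_le_one Nat.one_div_pos_of_nat F ω
        _ = 1 := by simp
    have hG_ne_top : ∀ n P, G n P ≠ ⊤ :=
      fun n P => ne_top_of_le_ne_top ENNReal.one_ne_top (hG_le_one n P)
    have hPF_le : ∀ (P : ProbabilityMeasure Ω) n, (P : Measure Ω) F ≤ G n P :=
      fun P n => measure_le_lintegral_thickenedIndicator _ hF.measurableSet _
    have htendsto : ∀ P : ProbabilityMeasure Ω,
        Tendsto (fun n => G n P) atTop (𝓝 ((P : Measure Ω) F)) := by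
      intro P
      exact tendsto_lintegral_thickenedIndicator_of_isClosed (P : Measure Ω) hF
        (fun n => Nat.one_div_pos_of_nat) tendsto_one_div_add_atTop_nhds_zero_nat
    have hGmono : ∀ n (P : ProbabilityMeasure Ω), G (n+1) P ≤ G n P := by
      intro n P
      refine lintegral_mono fun ω => ?_
      have := thickenedIndicator_mono (Nat.one_div_pos_of_nat (n := n+1))
        (Nat.one_div_pos_of_nat (n := n)) (by
          apply one_div_le_one_div_of_le <;> push_cast <;> linarith) F
      simp only [hfdef]
      exact_mod_cast this ω
    have hGcont : ∀ n, Continuous (G n) := by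
      intro n
      have : G n = fun P : ProbabilityMeasure Ω =>
          ((P.toFiniteMeasure.testAgainstNN (f n) : ℝ≥0) : ℝ≥0∞) := by
        funext P
        rw [FiniteMeasure.testAgainstNN_coe_eq]
        rfl
      rw [this]
      exact ENNReal.continuous_coe.comp (ProbabilityMeasure.continuous_testAgainstNN_eval (f n))
    -- expressing G via real integrals
    have hGI : ∀ n (P : ProbabilityMeasure Ω),
        G n P = ENNReal.ofReal (∫ ω, (f n ω : ℝ) ∂(P : Measure Ω)) := by
      intro n P
      rw [← BoundedContinuousFunction.toReal_lintegral_coe_eq_integral (f n) (P : Measure Ω),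
        ENNReal.ofReal_toReal (hG_ne_top n P)]
    have hI_le_one : ∀ n (P : ProbabilityMeasure Ω),
        ∫ ω, (f n ω : ℝ) ∂(P : Measure Ω) ≤ 1 := by
      intro n P
      rw [← BoundedContinuousFunction.toReal_lintegral_coe_eq_integral (f n) (P : Measure Ω)]
      have := hG_le_one n P
      calc (∫⁻ ω, (f n ω : ℝ≥0∞) ∂(P : Measure Ω)).toReal
          ≤ (1 : ℝ≥0∞).toReal := ENNReal.toReal_mono ENNReal.one_ne_top this
        _ = 1 := by simp
    -- the sup over a nonempty set equals ofReal of real sup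
    have hofReal : ∀ n (S : Set (ProbabilityMeasure Ω)), S.Nonempty →
        (⨆ P : S, G n P.val)
          = ENNReal.ofReal (⨆ P : S, ∫ ω, (f n ω : ℝ) ∂(P.val : Measure Ω)) := by
      intro n S hS
      haveI : Nonempty S := hS.to_subtype
      calc (⨆ P : S, G n P.val)
          = ⨆ P : S, ENNReal.ofReal (∫ ω, (f n ω : ℝ) ∂(P.val : Measure Ω)) :=
            iSup_congr fun P => hGI n P.val
        _ = ENNReal.ofReal (⨆ P : S, ∫ ω, (f n ω : ℝ) ∂(P.val : Measure Ω)) :=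
            aux_ofReal_iSup _ fun P => hI_le_one n P.val
    -- transferring heq
    have hsupeq : ∀ n, (⨆ P : Ps', G n P.val) = ⨆ P : Ps, G n P.val := by
      intro n
      have h2 : (⨆ P : Ps', ∫ ω, (f n ω : ℝ) ∂(P.val : Measure Ω))
          = ⨆ P : Ps, ∫ ω, (f n ω : ℝ) ∂(P.val : Measure Ω) := by
        have hc : Continuous (fun ω => (f n ω : ℝ)) :=
          NNReal.continuous_coe.comp (f n).continuous
        have hb : ∀ ω, |(f n ω : ℝ)| ≤ 1 := by
          intro ω
          rw [abs_of_nonneg (f n ω).coe_nonneg]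
          simp only [hfdef]
          exact_mod_cast thickenedIndicator_le_one Nat.one_div_pos_of_nat F ω
        exact heq (fun ω => (f n ω : ℝ)) hc ⟨1, hb⟩
      rw [hofReal n Ps' hne', hofReal n Ps hne, h2]
    -- compactness argument
    set c : ℝ≥0∞ := ⨅ n, ⨆ P : Ps, G n P.val with hcdef
    set K : ℕ → Set (ProbabilityMeasure Ω) := fun n => Ps ∩ (G n) ⁻¹' (Ici c) with hKdef
    have hKcl : ∀ n, IsClosed (K n) :=
      fun n => hcompact.isClosed.inter (IsClosed.preimage (hGcont n) isClosed_Ici)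
    have hKsub : ∀ n, K (n+1) ⊆ K n := by
      rintro n P ⟨hP, hc⟩
      exact ⟨hP, le_trans hc (hGmono n P)⟩
    have hKne : ∀ n, (K n).Nonempty := by
      intro n
      obtain ⟨P, hP, hmax⟩ := hcompact.exists_isMaxOn hne (hGcont n).continuousOn
      refine ⟨P, hP, ?_⟩
      have : (⨆ Q : Ps, G n Q.val) ≤ G n P := iSup_le fun Q => hmax Q.2
      exact le_trans (iInf_le (fun n => ⨆ Q : Ps, G n Q.val) n) this
    have hK0 : IsCompact (K 0) :=
      hcompact.inter_right (IsClosed.preimage (hGcont 0) isClosed_Ici)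
    obtain ⟨P₀, hP₀⟩ := IsCompact.nonempty_iInter_of_sequence_nonempty_isCompact_isClosed
      K hKsub hKne hK0 hKcl
    simp only [mem_iInter] at hP₀
    have hP₀Ps : P₀ ∈ Ps := (hP₀ 0).1
    have hcle : c ≤ (P₀ : Measure Ω) F :=
      ge_of_tendsto' (htendsto P₀) (fun n => (hP₀ n).2)
    -- conclude for closed F
    apply le_antisymm
    · have h1 : (⨆ P ∈ Ps', (P : Measure Ω) F) ≤ c := by
        refine le_iInf fun n => ?_
        refine iSup₂_le fun P hP => ?_
        calc (P : Measure Ω) F ≤ G n P := hPF_le P n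
          _ ≤ ⨆ Q : Ps', G n Q.val := le_iSup (fun Q : Ps' => G n Q.val) ⟨P, hP⟩
          _ = ⨆ Q : Ps, G n Q.val := hsupeq n
      refine h1.trans (hcle.trans ?_)
      exact le_iSup₂ (f := fun P (_ : P ∈ Ps) => (P : Measure Ω) F) P₀ hP₀Ps
    · exact iSup₂_le fun P hP => le_iSup₂ (f := fun P (_ : P ∈ Ps') => (P : Measure Ω) F) P (hsub hP)
  -- general Borel sets via inner regularity
  intro A hA
  apply le_antisymm
  · refine iSup₂_le fun P hP => ?_
    rw [hA.measure_eq_iSup_isClosed_of_ne_top (measure_ne_top (P : Measure Ω) A)]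
    refine iSup₂_le fun F hFA => iSup_le fun hFcl => ?_
    calc (P : Measure Ω) F
        ≤ ⨆ Q ∈ Ps', (Q : Measure Ω) F :=
          le_iSup₂ (f := fun Q (_ : Q ∈ Ps') => (Q : Measure Ω) F) P hP
      _ = ⨆ Q ∈ Ps, (Q : Measure Ω) F := key F hFcl
      _ ≤ ⨆ Q ∈ Ps, (Q : Measure Ω) A :=
          iSup₂_mono fun Q _ => measure_mono hFA
  · exact iSup₂_le fun P hP => le_iSup₂ (f := fun P (_ : P ∈ Ps') => (P : Measure Ω) A) P (hsub hP)
end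

section
/- Let 𝒫₁ and 𝒫₂ be two nonempty compact sets of Borel probability measures on Ω such that sup_{P ∈ 𝒫₁} ∫ f dP = sup_{P ∈ 𝒫₂} ∫ f dP for every bounded continuous function f : Ω → ℝ. Then sup_{P ∈ 𝒫₁} P(A) = sup_{P ∈ 𝒫₂} P(A) for every Borel set A ⊆ Ω. -/
open MeasureTheory Filter Topology Set BoundedContinuousFunction
open scoped ENNReal NNReal

namespace UpperCapacityAux

noncomputable def δ (n : ℕ) : ℝ := 1 / ((n : ℝ) + 1)

lemma δpos (n : ℕ) : 0 < δ n := by unfold δ; positivity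

lemma δtendsto : Tendsto δ atTop (𝓝 0) := tendsto_one_div_add_atTop_nhds_zero_nat

lemma δanti : Antitone δ := by
  intro m n h
  unfold δ
  apply one_div_le_one_div_of_le <;> [positivity; simp [h]]

section Aux

variable {Ω : Type*} [PseudoMetricSpace Ω] [SecondCountableTopology Ω]
  [MeasurableSpace Ω] [BorelSpace Ω]

omit [SecondCountableTopology Ω] in
/-- Conversion between the `lintegral` sup and the Bochner integral sup. -/
lemma sup_lintegral_eq_ofReal_sup_integral (Ps : Set (ProbabilityMeasure Ω))
    (hne : Ps.Nonempty) (f : Ω →ᵇ ℝ≥0) :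
    (⨆ P : Ps, ∫⁻ ω, (f ω : ℝ≥0∞) ∂((P : ProbabilityMeasure Ω) : Measure Ω))
      = ENNReal.ofReal (⨆ P : Ps, ∫ ω, (f ω : ℝ) ∂((P : ProbabilityMeasure Ω) : Measure Ω)) := by
  haveI : Nonempty Ps := hne.to_subtype
  have h1 : ∀ P : Ps, (∫⁻ ω, (f ω : ℝ≥0∞) ∂((P : ProbabilityMeasure Ω) : Measure Ω))
      = ENNReal.ofReal (∫ ω, (f ω : ℝ) ∂((P : ProbabilityMeasure Ω) : Measure Ω)) := by
    intro P
    rw [← toReal_lintegral_coe_eq_integral f _,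
      ENNReal.ofReal_toReal (lintegral_lt_top_of_nnreal _ f).ne]
  have hmono : Monotone ENNReal.ofReal := fun _ _ h => ENNReal.ofReal_le_ofReal h
  have hbdd : BddAbove (Set.range fun P : Ps =>
      ∫ ω, (f ω : ℝ) ∂((P : ProbabilityMeasure Ω) : Measure Ω)) := by
    refine ⟨(nndist 0 f : ℝ), forall_mem_range.mpr fun P => ?_⟩
    calc ∫ ω, (f ω : ℝ) ∂((P : ProbabilityMeasure Ω) : Measure Ω)
        ≤ ∫ _, ((nndist 0 f : ℝ)) ∂((P : ProbabilityMeasure Ω) : Measure Ω) := by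
          apply integral_mono (f.integrable_of_nnreal _) (integrable_const _)
          intro ω
          exact_mod_cast f.apply_le_nndist_zero ω
      _ = (nndist 0 f : ℝ) := by simp
  simp_rw [h1]
  exact (hmono.map_ciSup_of_continuousAt (ENNReal.continuous_ofReal.continuousAt) hbdd).symm

/-- For a nonempty compact family of probability measures, the sup of the measures of a
closed set equals the infimum over `n` of the sups of the integrals of thickened
indicators with radius `δ n`. -/
lemma sup_meas_closed_eq (Ps : Set (ProbabilityMeasure Ω)) (hne : Ps.Nonempty)
    (hc : IsCompact Ps) {F : Set Ω} (hF : IsClosed F) :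
    (⨆ P : Ps, ((P : ProbabilityMeasure Ω) : Measure Ω) F)
      = ⨅ n : ℕ, ⨆ P : Ps, ∫⁻ ω, (thickenedIndicator (δpos n) F ω : ℝ≥0∞)
          ∂((P : ProbabilityMeasure Ω) : Measure Ω) := by
  haveI : Nonempty Ps := hne.to_subtype
  set g : ℕ → ProbabilityMeasure Ω → ℝ≥0∞ := fun n Q =>
    ∫⁻ ω, (thickenedIndicator (δpos n) F ω : ℝ≥0∞) ∂(Q : Measure Ω) with hg
  refine le_antisymm (le_iInf fun n => iSup_mono fun P => ?_) ?_
  · rw [← lintegral_indicator_one hF.measurableSet]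
    apply lintegral_mono fun ω => ?_
    by_cases hω : ω ∈ F
    · simp [Set.indicator_of_mem hω, thickenedIndicator_one (δpos n) F hω]
    · simp [Set.indicator_of_notMem hω]
  · set L := ⨅ n : ℕ, ⨆ P : Ps, g n (P : ProbabilityMeasure Ω) with hL
    have cont : ∀ n, Continuous (g n) := by
      intro n
      rw [continuous_iff_continuousAt]
      intro Q
      exact ProbabilityMeasure.tendsto_iff_forall_lintegral_tendsto.mp
        (tendsto_id (x := 𝓝 Q)) (thickenedIndicator (δpos n) F)
    choose Pn hPn hmax using fun n => hc.exists_isMaxOn hne ((cont n).continuousOn)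
    obtain ⟨P₀, hP₀mem, φ, hφ, hconv⟩ := hc.tendsto_subseq hPn
    have hLm : ∀ m, L ≤ g m P₀ := by
      intro m
      have tend := ProbabilityMeasure.tendsto_iff_forall_lintegral_tendsto.mp hconv
        (thickenedIndicator (δpos m) F)
      refine ge_of_tendsto tend ?_
      filter_upwards [eventually_ge_atTop m] with k hk
      have h1 : L ≤ g (φ k) (Pn (φ k)) := by
        refine le_trans (iInf_le _ (φ k)) (iSup_le fun Q => ?_)
        exact hmax (φ k) Q.2
      refine h1.trans (lintegral_mono fun ω => ?_)
      exact ENNReal.coe_le_coe.mpr (thickenedIndicator_mono (δpos (φ k)) (δpos m)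
        (δanti (hk.trans (hφ.le_apply))) F ω)
    have tendF := tendsto_lintegral_thickenedIndicator_of_isClosed
      ((P₀ : Measure Ω)) hF δpos δtendsto
    have hPF : L ≤ (P₀ : Measure Ω) F := ge_of_tendsto tendF (Eventually.of_forall hLm)
    exact hPF.trans (le_iSup (fun P : Ps => ((P : ProbabilityMeasure Ω) : Measure Ω) F)
      ⟨P₀, hP₀mem⟩)

end Aux

end UpperCapacityAux

open UpperCapacityAux

/-- Two nonempty weakly compact sets of Borel probability measures on a Polish
space with the same upper expectation on all bounded continuous functions have
the same capacity on all Borel sets. -/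
theorem upperCapacity_eq_of_two_compact_representations
    {Ω : Type*} [TopologicalSpace Ω] [PolishSpace Ω] [MeasurableSpace Ω] [BorelSpace Ω]
    (Ps₁ Ps₂ : Set (ProbabilityMeasure Ω))
    (hne₁ : Ps₁.Nonempty) (hcompact₁ : IsCompact Ps₁)
    (hne₂ : Ps₂.Nonempty) (hcompact₂ : IsCompact Ps₂)
    (heq : ∀ f : Ω → ℝ, Continuous f → (∃ C : ℝ, ∀ ω, |f ω| ≤ C) →
      (⨆ P : Ps₁, ∫ ω, f ω ∂((P : ProbabilityMeasure Ω) : Measure Ω))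
        = ⨆ P : Ps₂, ∫ ω, f ω ∂((P : ProbabilityMeasure Ω) : Measure Ω)) :
    ∀ A : Set Ω, MeasurableSet A →
      (⨆ P ∈ Ps₁, (P : Measure Ω) A) = ⨆ P ∈ Ps₂, (P : Measure Ω) A := by
  intro A hA
  letI := TopologicalSpace.upgradeIsCompletelyMetrizable Ω
  -- the sups over closed sets agree
  have hclosed : ∀ F : Set Ω, IsClosed F →
      (⨆ P ∈ Ps₁, (P : Measure Ω) F) = ⨆ P ∈ Ps₂, (P : Measure Ω) F := by
    intro F hFc
    rw [iSup_subtype', iSup_subtype', sup_meas_closed_eq Ps₁ hne₁ hcompact₁ hFc,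
      sup_meas_closed_eq Ps₂ hne₂ hcompact₂ hFc]
    refine iInf_congr fun n => ?_
    rw [sup_lintegral_eq_ofReal_sup_integral Ps₁ hne₁ (thickenedIndicator (δpos n) F),
      sup_lintegral_eq_ofReal_sup_integral Ps₂ hne₂ (thickenedIndicator (δpos n) F)]
    congr 1
    refine heq _ (NNReal.continuous_coe.comp (thickenedIndicator (δpos n) F).continuous) ?_
    refine ⟨1, fun ω => ?_⟩
    rw [abs_of_nonneg (NNReal.coe_nonneg _)]
    exact_mod_cast thickenedIndicator_le_one (δpos n) F ω
  -- reduce to closed sets via inner regularity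
  have step : ∀ Qs Rs : Set (ProbabilityMeasure Ω),
      (∀ F : Set Ω, IsClosed F →
        (⨆ P ∈ Qs, (P : Measure Ω) F) = ⨆ P ∈ Rs, (P : Measure Ω) F) →
      (⨆ P ∈ Qs, (P : Measure Ω) A) ≤ ⨆ P ∈ Rs, (P : Measure Ω) A := by
    intro Qs Rs hF
    refine iSup₂_le fun P hP => ?_
    refine ENNReal.le_of_forall_pos_le_add fun ε hε _ => ?_
    obtain ⟨F, hFA, hFc, hlt⟩ := hA.exists_isClosed_lt_add (μ := (P : Measure Ω))
      (measure_ne_top _ A) (ε := (ε : ℝ≥0∞)) (by exact_mod_cast hε.ne')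
    calc (P : Measure Ω) A ≤ (P : Measure Ω) F + ε := hlt.le
      _ ≤ (⨆ P ∈ Qs, (P : Measure Ω) F) + ε :=
          add_le_add_left (le_biSup (fun P : ProbabilityMeasure Ω => (P : Measure Ω) F) hP) ε
      _ = (⨆ P ∈ Rs, (P : Measure Ω) F) + ε := by rw [hF F hFc]
      _ ≤ (⨆ P ∈ Rs, (P : Measure Ω) A) + ε :=
          add_le_add_left (iSup₂_mono fun Q _ => measure_mono hFA) ε
  exact le_antisymm (step Ps₁ Ps₂ hclosed) (step Ps₂ Ps₁ fun F hF => (hclosed F hF).symm)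
end

section
/- For every closed set F ⊆ Ω, c(F) = inf { sup_{P ∈ 𝒫} ∫ f dP : f : Ω → ℝ continuous with 1_F ≤ f ≤ 1 }, where 1_F is the indicator function of F. -/
open MeasureTheory Filter Topology Set BoundedContinuousFunction
open scoped NNReal ENNReal

/-- For a nonempty weakly compact set of Borel probability measures on a
Polish space, the capacity of a closed set `F` equals the infimum of the upper
expectations of continuous functions `f` with `1_F ≤ f ≤ 1`. -/
theorem upperCapacity_closed_eq_iInf_continuous
    {Ω : Type*} [TopologicalSpace Ω] [PolishSpace Ω] [MeasurableSpace Ω] [BorelSpace Ω]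
    (Ps : Set (ProbabilityMeasure Ω)) (hne : Ps.Nonempty) (hcompact : IsCompact Ps)
    (F : Set Ω) (hF : IsClosed F) :
    (⨆ P : Ps, (((P : ProbabilityMeasure Ω) : Measure Ω) F).toReal)
      = sInf { x : ℝ | ∃ f : Ω → ℝ, Continuous f ∧
          (∀ ω, F.indicator (fun _ => (1 : ℝ)) ω ≤ f ω) ∧ (∀ ω, f ω ≤ 1) ∧
          x = ⨆ P : Ps, ∫ ω, f ω ∂((P : ProbabilityMeasure Ω) : Measure Ω) } := by
  letI := TopologicalSpace.upgradeIsCompletelyMetrizable Ω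
  haveI : Nonempty Ps := hne.to_subtype
  have hFm : MeasurableSet F := hF.measurableSet
  set S := ⨆ P : Ps, (((P : ProbabilityMeasure Ω) : Measure Ω) F).toReal with hSdef
  -- boundedness of the LHS sup
  have hbdd : BddAbove (Set.range fun P : Ps =>
      (((P : ProbabilityMeasure Ω) : Measure Ω) F).toReal) := by
    refine ⟨1, ?_⟩
    rintro x ⟨P, rfl⟩
    have h1 : ((P : ProbabilityMeasure Ω) : Measure Ω) F ≤ 1 := prob_le_one
    have := ENNReal.toReal_mono ENNReal.one_ne_top h1
    simpa using this
  -- integral of the indicator equals the measure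
  have hind : ∀ Q : ProbabilityMeasure Ω,
      ∫ ω, F.indicator (fun _ => (1 : ℝ)) ω ∂(Q : Measure Ω) = ((Q : Measure Ω) F).toReal := by
    intro Q
    exact integral_indicator_one (μ := (Q : Measure Ω)) hFm
  -- Step 1 : S is a lower bound for the set
  have key1 : ∀ x ∈ { x : ℝ | ∃ f : Ω → ℝ, Continuous f ∧
      (∀ ω, F.indicator (fun _ => (1 : ℝ)) ω ≤ f ω) ∧ (∀ ω, f ω ≤ 1) ∧
      x = ⨆ P : Ps, ∫ ω, f ω ∂((P : ProbabilityMeasure Ω) : Measure Ω) }, S ≤ x := by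
    rintro x ⟨f, hf_cont, hf_lb, hf_ub, rfl⟩
    have h0f : ∀ ω, 0 ≤ f ω := by
      intro ω
      refine le_trans ?_ (hf_lb ω)
      by_cases h : ω ∈ F <;> simp [h]
    have hint : ∀ Q : ProbabilityMeasure Ω, Integrable f (Q : Measure Ω) := by
      intro Q
      refine (integrable_const (1 : ℝ)).mono' hf_cont.aestronglyMeasurable ?_
      exact ae_of_all _ fun ω => by
        rw [Real.norm_eq_abs, abs_of_nonneg (h0f ω)]; exact hf_ub ω
    have hbdd' : BddAbove (Set.range fun P : Ps =>
        ∫ ω, f ω ∂((P : ProbabilityMeasure Ω) : Measure Ω)) := by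
      refine ⟨1, ?_⟩
      rintro y ⟨P, rfl⟩
      calc ∫ ω, f ω ∂((P : ProbabilityMeasure Ω) : Measure Ω)
          ≤ ∫ _, (1 : ℝ) ∂((P : ProbabilityMeasure Ω) : Measure Ω) :=
            integral_mono (hint P) (integrable_const 1) hf_ub
        _ = 1 := by simp
    refine ciSup_le fun P => ?_
    have : (((P : ProbabilityMeasure Ω) : Measure Ω) F).toReal
        ≤ ∫ ω, f ω ∂((P : ProbabilityMeasure Ω) : Measure Ω) := by
      rw [← hind P]
      exact integral_mono ((integrable_const (1 : ℝ)).indicator hFm) (hint P) hf_lb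
    exact this.trans (le_ciSup hbdd' P)
  -- the set is nonempty (take f ≡ 1)
  have hset_ne : { x : ℝ | ∃ f : Ω → ℝ, Continuous f ∧
      (∀ ω, F.indicator (fun _ => (1 : ℝ)) ω ≤ f ω) ∧ (∀ ω, f ω ≤ 1) ∧
      x = ⨆ P : Ps, ∫ ω, f ω ∂((P : ProbabilityMeasure Ω) : Measure Ω) }.Nonempty := by
    refine ⟨⨆ P : Ps, ∫ _, (1 : ℝ) ∂((P : ProbabilityMeasure Ω) : Measure Ω),
      fun _ => 1, continuous_const, ?_, fun ω => le_rfl, rfl⟩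
    intro ω
    by_cases h : ω ∈ F <;> simp [h]
  have hbddbelow : BddBelow { x : ℝ | ∃ f : Ω → ℝ, Continuous f ∧
      (∀ ω, F.indicator (fun _ => (1 : ℝ)) ω ≤ f ω) ∧ (∀ ω, f ω ≤ 1) ∧
      x = ⨆ P : Ps, ∫ ω, f ω ∂((P : ProbabilityMeasure Ω) : Measure Ω) } :=
    ⟨S, fun x hx => key1 x hx⟩
  -- the approximating bounded continuous functions
  have δpos : ∀ n : ℕ, (0 : ℝ) < 1 / (n + 1) := fun n => Nat.one_div_pos_of_nat
  set fb : ℕ → BoundedContinuousFunction Ω ℝ := fun n =>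
    BoundedContinuousFunction.comp _ isometry_subtype_coe.lipschitz
      (thickenedIndicator (δpos n) F) with hfb
  have fb_apply : ∀ n ω, fb n ω = ((thickenedIndicator (δpos n) F ω : ℝ≥0) : ℝ) :=
    fun n ω => rfl
  have fb_nonneg : ∀ n ω, 0 ≤ fb n ω := fun n ω => by
    rw [fb_apply]; exact NNReal.coe_nonneg _
  have fb_le_one : ∀ n ω, fb n ω ≤ 1 := fun n ω => by
    rw [fb_apply]
    exact_mod_cast thickenedIndicator_le_one (δpos n) F ω
  have fb_ge_ind : ∀ n ω, F.indicator (fun _ => (1 : ℝ)) ω ≤ fb n ω := by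
    intro n ω
    by_cases h : ω ∈ F
    · rw [fb_apply, Set.indicator_of_mem h, thickenedIndicator_one (δpos n) F h]
      norm_num
    · simpa [h] using fb_nonneg n ω
  have fb_antitone : ∀ {m n : ℕ}, m ≤ n → ∀ ω, fb n ω ≤ fb m ω := by
    intro m n hmn ω
    rw [fb_apply, fb_apply]
    have hδ : (1 : ℝ) / (n + 1) ≤ 1 / (m + 1) := by
      have hmn' : (m : ℝ) ≤ n := Nat.cast_le.mpr hmn
      apply one_div_le_one_div_of_le
      · positivity
      · linarith
    exact_mod_cast thickenedIndicator_mono (δpos n) (δpos m) hδ F ω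
  -- the functionals
  set G : ℕ → ProbabilityMeasure Ω → ℝ :=
    fun n Q => ∫ ω, fb n ω ∂(Q : Measure Ω) with hG
  have G_cont : ∀ n, Continuous (G n) := fun n =>
    ProbabilityMeasure.continuous_integral_boundedContinuousFunction (fb n)
  have G_anti : ∀ {m n : ℕ}, m ≤ n → ∀ Q : ProbabilityMeasure Ω, G n Q ≤ G m Q := by
    intro m n hmn Q
    exact integral_mono ((fb n).integrable _) ((fb m).integrable _) (fb_antitone hmn)
  -- pointwise convergence of the integrals to the measure of F
  have G_tendsto : ∀ Q : ProbabilityMeasure Ω,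
      Tendsto (fun n => G n Q) atTop (𝓝 (((Q : Measure Ω) F).toReal)) := by
    intro Q
    rw [← hind Q]
    apply tendsto_integral_of_dominated_convergence (fun _ => (1 : ℝ))
    · exact fun n => (fb n).continuous.aestronglyMeasurable
    · exact integrable_const 1
    · intro n
      refine ae_of_all _ fun ω => ?_
      rw [Real.norm_eq_abs, abs_of_nonneg (fb_nonneg n ω)]
      exact fb_le_one n ω
    · refine ae_of_all _ fun ω => ?_
      have key := thickenedIndicator_tendsto_indicator_closure δpos
        tendsto_one_div_add_atTop_nhds_zero_nat F
      rw [tendsto_pi_nhds] at key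
      have := (NNReal.continuous_coe.tendsto _).comp (key ω)
      have heq : ((Set.indicator (closure F) (fun _ => (1 : ℝ≥0)) ω : ℝ≥0) : ℝ)
          = F.indicator (fun _ => (1 : ℝ)) ω := by
        rw [hF.closure_eq]
        by_cases h : ω ∈ F <;> simp [h]
      rw [heq] at this
      exact this
  -- Step 2 : sInf ≤ S + ε for every ε > 0
  have key2 : ∀ ε : ℝ, 0 < ε →
      sInf { x : ℝ | ∃ f : Ω → ℝ, Continuous f ∧
        (∀ ω, F.indicator (fun _ => (1 : ℝ)) ω ≤ f ω) ∧ (∀ ω, f ω ≤ 1) ∧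
        x = ⨆ P : Ps, ∫ ω, f ω ∂((P : ProbabilityMeasure Ω) : Measure Ω) } ≤ S + ε := by
    intro ε hε
    have hmem : ∀ n : ℕ, (⨆ P : Ps, G n (P : ProbabilityMeasure Ω)) ∈
        { x : ℝ | ∃ f : Ω → ℝ, Continuous f ∧
          (∀ ω, F.indicator (fun _ => (1 : ℝ)) ω ≤ f ω) ∧ (∀ ω, f ω ≤ 1) ∧
          x = ⨆ P : Ps, ∫ ω, f ω ∂((P : ProbabilityMeasure Ω) : Measure Ω) } := by
      intro n
      exact ⟨fun ω => fb n ω, (fb n).continuous, fb_ge_ind n, fb_le_one n, rfl⟩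
    -- it suffices to find n with sup_P G n P ≤ S + ε
    have claim : ∃ n : ℕ, (⨆ P : Ps, G n (P : ProbabilityMeasure Ω)) ≤ S + ε := by
      by_contra hcon
      push_neg at hcon
      -- nested nonempty compact sets
      set K : ℕ → Set (ProbabilityMeasure Ω) :=
        fun n => Ps ∩ (G n) ⁻¹' (Set.Ici (S + ε)) with hK
      have K_compact : ∀ n, IsCompact (K n) := fun n =>
        hcompact.inter_right (isClosed_Ici.preimage (G_cont n))
      have K_closed : ∀ n, IsClosed (K n) := fun n =>
        (K_compact n).isClosed
      have K_ne : ∀ n, (K n).Nonempty := by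
        intro n
        obtain ⟨P, hP⟩ := exists_lt_of_lt_ciSup (hcon n)
        exact ⟨(P : ProbabilityMeasure Ω), P.2, le_of_lt hP⟩
      have K_anti : ∀ n, K (n + 1) ⊆ K n := by
        intro n Q hQ
        exact ⟨hQ.1, le_trans hQ.2 (G_anti (Nat.le_succ n) Q)⟩
      obtain ⟨Q, hQ⟩ := IsCompact.nonempty_iInter_of_sequence_nonempty_isCompact_isClosed
        K K_anti K_ne (K_compact 0) K_closed
      simp only [Set.mem_iInter] at hQ
      have hQPs : Q ∈ Ps := (hQ 0).1
      have hge : ∀ n, S + ε ≤ G n Q := fun n => (hQ n).2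
      have hlim : S + ε ≤ ((Q : Measure Ω) F).toReal :=
        ge_of_tendsto (G_tendsto Q) (Eventually.of_forall hge)
      have hle : ((Q : Measure Ω) F).toReal ≤ S := le_ciSup hbdd (⟨Q, hQPs⟩ : Ps)
      linarith
    obtain ⟨n, hn⟩ := claim
    exact le_trans (csInf_le hbddbelow (hmem n)) hn
  refine le_antisymm (le_csInf hset_ne key1) ?_
  exact le_of_forall_pos_le_add key2
end
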